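/- Let X ∈ ℝ^{n×p} with p ≤ n satisfy XᵀX = I, let W ∈ ℝ^{n×n} be skew-symmetric (Wᵀ = −W), and set A = X + WX. Then AᵀA = I + Xᵀ Wᵀ W X; consequently every singular value of A is at least 1, and the largest singular value satisfies σ₁(A) ≤ √(‖A‖_F² − (p−1)), where ‖·‖_F is the Frobenius norm. -/

import Mathlib

open Matrix

private lemma dot_tmul (n p : ℕ) (M : Matrix (Fin n) (Fin p) ℝ) (v : Fin p → ℝ) :
    v ⬝ᵥ (Mᵀ * M) *ᵥ v = (M *ᵥ v) ⬝ᵥ (M *ᵥ v) := by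
  rw [← mulVec_mulVec, dotProduct_mulVec, vecMul_transpose]

private lemma frob_eq_trace (n p : ℕ) (M : Matrix (Fin n) (Fin p) ℝ) :
    ∑ i, ∑ j, (M i j) ^ 2 = (Mᵀ * M).trace := by
  simp only [Matrix.trace, Matrix.diag, Matrix.mul_apply, Matrix.transpose_apply]
  rw [Finset.sum_comm]
  simp [sq]

/-- Let `X ∈ ℝ^{n×p}` (`p ≤ n`) with `XᵀX = I`, let `W ∈ ℝ^{n×n}` be
skew-symmetric, and `A = X + WX`. Then `AᵀA = I + XᵀWᵀWX`; consequently every singular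
value of `A` (square root of an eigenvalue of `AᵀA`) is at least `1`, and the largest
singular value satisfies `σ₁(A) ≤ √(‖A‖_F² − (p−1))`, expressed by the operator-norm
bound `√(Σᵢ (Av)ᵢ²) ≤ √(‖A‖_F² − (p−1)) · √(Σⱼ vⱼ²)` for every vector `v`. -/
theorem retraction_gram_and_singular_value_bounds (n p : ℕ) (hpn : p ≤ n)
    (X : Matrix (Fin n) (Fin p) ℝ) (W : Matrix (Fin n) (Fin n) ℝ)
    (hX : Xᵀ * X = 1) (hW : Wᵀ = -W)
    (A : Matrix (Fin n) (Fin p) ℝ) (hA : A = X + W * X) :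
    Aᵀ * A = 1 + Xᵀ * Wᵀ * W * X ∧
    (∀ (h : (Aᵀ * A).IsHermitian) (i : Fin p), 1 ≤ Real.sqrt (h.eigenvalues i)) ∧
    (∀ v : Fin p → ℝ,
      Real.sqrt (∑ i, (A.mulVec v i) ^ 2)
        ≤ Real.sqrt ((∑ i, ∑ j, (A i j) ^ 2) - ((p : ℝ) - 1))
            * Real.sqrt (∑ j, (v j) ^ 2)) := by
  set B : Matrix (Fin n) (Fin p) ℝ := W * X with hB
  have key : Aᵀ * A = 1 + Xᵀ * Wᵀ * W * X := by
    subst hA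
    rw [transpose_add, transpose_mul, Matrix.add_mul, Matrix.mul_add, Matrix.mul_add, hX, hW]
    simp only [Matrix.neg_mul, Matrix.mul_neg, Matrix.mul_assoc]
    abel
  have keyB : Aᵀ * A = 1 + Bᵀ * B := by
    rw [key, hB, transpose_mul, Matrix.mul_assoc, Matrix.mul_assoc]
  -- quadratic form identity
  have quad : ∀ v : Fin p → ℝ,
      v ⬝ᵥ (Aᵀ * A) *ᵥ v = v ⬝ᵥ v + (B *ᵥ v) ⬝ᵥ (B *ᵥ v) := by
    intro v
    rw [keyB, Matrix.add_mulVec, dotProduct_add, Matrix.one_mulVec, dot_tmul]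
  refine ⟨key, ?_, ?_⟩
  · -- eigenvalue bound
    intro h i
    set u : Fin p → ℝ := WithLp.ofLp (h.eigenvectorBasis i : EuclideanSpace ℝ (Fin p)) with hu
    have hnorm : ‖(h.eigenvectorBasis i : EuclideanSpace ℝ (Fin p))‖ = 1 :=
      h.eigenvectorBasis.orthonormal.1 i
    have huu : u ⬝ᵥ u = 1 := by
      have : Real.sqrt (∑ j, ‖u j‖ ^ 2) = 1 := by
        rw [← EuclideanSpace.norm_eq]; exact hnorm
      have h2 : ∑ j, (u j) ^ 2 = 1 := by
        have := congrArg (· ^ 2) this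
        simpa [Real.sq_sqrt (Finset.sum_nonneg fun j _ => sq_nonneg (u j)),
          Real.norm_eq_abs, sq_abs] using this
      simpa [dotProduct, ← sq] using h2
    have heig : (Aᵀ * A) *ᵥ u = h.eigenvalues i • u := by
      simpa [hu] using h.mulVec_eigenvectorBasis i
    have hq := quad u
    rw [heig, dotProduct_smul, huu, smul_eq_mul, mul_one] at hq
    have hge : 1 ≤ h.eigenvalues i := by
      have : 0 ≤ (B *ᵥ u) ⬝ᵥ (B *ᵥ u) :=
        Finset.sum_nonneg fun j _ => mul_self_nonneg _
      linarith
    calc (1 : ℝ) = Real.sqrt 1 := by simp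
      _ ≤ Real.sqrt (h.eigenvalues i) := Real.sqrt_le_sqrt hge
  · -- operator norm bound
    intro v
    have hFrob : ∑ i, ∑ j, (A i j) ^ 2 = (p : ℝ) + ∑ i, ∑ j, (B i j) ^ 2 := by
      rw [frob_eq_trace, keyB, trace_add, frob_eq_trace]
      simp
    have hsub : (∑ i, ∑ j, (A i j) ^ 2) - ((p : ℝ) - 1)
        = 1 + ∑ i, ∑ j, (B i j) ^ 2 := by rw [hFrob]; ring
    have hvv : ∑ j, (v j) ^ 2 = v ⬝ᵥ v := by simp [dotProduct, sq]
    have hCS : (B *ᵥ v) ⬝ᵥ (B *ᵥ v) ≤ (∑ i, ∑ j, (B i j) ^ 2) * ∑ j, (v j) ^ 2 := by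
      have : ∀ i, (B *ᵥ v) i * (B *ᵥ v) i ≤ (∑ j, (B i j) ^ 2) * ∑ j, (v j) ^ 2 := by
        intro i
        have := Finset.sum_mul_sq_le_sq_mul_sq Finset.univ (fun j => B i j) v
        simpa [Matrix.mulVec, dotProduct, ← sq] using this
      calc (B *ᵥ v) ⬝ᵥ (B *ᵥ v) = ∑ i, (B *ᵥ v) i * (B *ᵥ v) i := rfl
        _ ≤ ∑ i, (∑ j, (B i j) ^ 2) * ∑ j, (v j) ^ 2 :=
            Finset.sum_le_sum fun i _ => this i
        _ = (∑ i, ∑ j, (B i j) ^ 2) * ∑ j, (v j) ^ 2 := by rw [← Finset.sum_mul]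
    have hAv : ∑ i, (A.mulVec v i) ^ 2 = v ⬝ᵥ v + (B *ᵥ v) ⬝ᵥ (B *ᵥ v) := by
      rw [← quad v, dot_tmul]
      simp [dotProduct, sq]
    have hmain : ∑ i, (A.mulVec v i) ^ 2
        ≤ ((∑ i, ∑ j, (A i j) ^ 2) - ((p : ℝ) - 1)) * ∑ j, (v j) ^ 2 := by
      rw [hAv, hsub, add_mul, one_mul, hvv]
      rw [← hvv]
      linarith [hCS]
    calc Real.sqrt (∑ i, (A.mulVec v i) ^ 2)
        ≤ Real.sqrt (((∑ i, ∑ j, (A i j) ^ 2) - ((p : ℝ) - 1)) * ∑ j, (v j) ^ 2) :=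
          Real.sqrt_le_sqrt hmain
      _ = Real.sqrt ((∑ i, ∑ j, (A i j) ^ 2) - ((p : ℝ) - 1)) * Real.sqrt (∑ j, (v j) ^ 2) := by
          rw [Real.sqrt_mul']
          exact Finset.sum_nonneg fun j _ => sq_nonneg _
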